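/- arXiv:1706.09018 — 5 statements merged into one kernel-verified Lean document; each statement's English description precedes it below -/
import Mathlib

section
/- Let A be a set of ordinals, I an ideal on A, λ a regular cardinal, and f⃗ = ⟨f_ξ : ξ < λ⟩ a <_I-increasing sequence of functions from A to the ordinals. If f⃗ is not Ugly, then every I-least upper bound of f⃗ is an I-exact upper bound of f⃗. -/
noncomputable section

namespace PCFPaper

open Set

/-- An ideal on a set `A` of ordinals: a collection of subsets of `A` containing `∅`,
closed under subsets and finite unions, with `A ∉ I`. -/
structure IsIdealOn (A : Set Ordinal.{0}) (I : Set (Set Ordinal.{0})) : Prop where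
  subset_of_mem : ∀ X ∈ I, X ⊆ A
  empty_mem : (∅ : Set Ordinal.{0}) ∈ I
  mem_of_subset : ∀ X ∈ I, ∀ Y, Y ⊆ X → Y ∈ I
  union_mem : ∀ X ∈ I, ∀ Y ∈ I, X ∪ Y ∈ I
  not_mem : A ∉ I

/-- An ultrafilter on the set `A` of ordinals. -/
structure IsUltrafilterOn (A : Set Ordinal.{0}) (D : Set (Set Ordinal.{0})) : Prop where
  subset_of_mem : ∀ X ∈ D, X ⊆ A
  univ_mem : A ∈ D
  empty_not_mem : (∅ : Set Ordinal.{0}) ∉ D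
  superset_mem : ∀ X ∈ D, ∀ Y, X ⊆ Y → Y ⊆ A → Y ∈ D
  inter_mem : ∀ X ∈ D, ∀ Y ∈ D, X ∩ Y ∈ D
  mem_or_compl_mem : ∀ X, X ⊆ A → X ∈ D ∨ A \ X ∈ D

variable (A : Set Ordinal.{0}) (I : Set (Set Ordinal.{0}))

/-- `f <_I g` : the set where `f(a) < g(a)` fails lies in `I`. -/
def ltI (f g : Ordinal.{0} → Ordinal.{0}) : Prop :=
  {a | a ∈ A ∧ ¬ f a < g a} ∈ I

/-- `f ≤_I g` : the set where `f(a) ≤ g(a)` fails lies in `I`. -/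
def leI (f g : Ordinal.{0} → Ordinal.{0}) : Prop :=
  {a | a ∈ A ∧ ¬ f a ≤ g a} ∈ I

/-- `f <_D g` for a filter/ultrafilter `D` : the set where `f(a) < g(a)` lies in `D`. -/
def ltD (f g : Ordinal.{0} → Ordinal.{0}) : Prop :=
  {a | a ∈ A ∧ f a < g a} ∈ I

/-- `f ≤_D g` for a filter/ultrafilter `D`. -/
def leD (f g : Ordinal.{0} → Ordinal.{0}) : Prop :=
  {a | a ∈ A ∧ f a ≤ g a} ∈ I

/-- `B =_I C` : the symmetric difference lies in `I`. -/
def EqModI (B C : Set Ordinal.{0}) : Prop :=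
  (B \ C) ∪ (C \ B) ∈ I

/-- `B` is an `I`-positive subset of `A`. -/
def IsPositive (B : Set Ordinal.{0}) : Prop :=
  B ⊆ A ∧ B ∉ I

/-- `⟨f ξ : ξ < μ⟩` is a `<_I`-increasing sequence of functions. -/
def IncreasingModI (μ : Ordinal.{0}) (f : Ordinal.{0} → Ordinal.{0} → Ordinal.{0}) : Prop :=
  ∀ ξ < μ, ∀ η < μ, ξ < η → ltI A I (f ξ) (f η)

/-- `g` is an `I`-upper bound of the sequence `⟨f ξ : ξ < μ⟩`. -/
def IsUBseq (μ : Ordinal.{0}) (f : Ordinal.{0} → Ordinal.{0} → Ordinal.{0})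
    (g : Ordinal.{0} → Ordinal.{0}) : Prop :=
  ∀ ξ < μ, leI A I (f ξ) g

/-- `g` is an `I`-least upper bound of the sequence `⟨f ξ : ξ < μ⟩`. -/
def IsLUBseq (μ : Ordinal.{0}) (f : Ordinal.{0} → Ordinal.{0} → Ordinal.{0})
    (g : Ordinal.{0} → Ordinal.{0}) : Prop :=
  IsUBseq A I μ f g ∧ ∀ g', IsUBseq A I μ f g' → leI A I g g'

/-- `g` is an `I`-exact upper bound of the sequence `⟨f ξ : ξ < μ⟩` : a least upper
bound such that the sequence is `<_I`-cofinal below `g`. -/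
def IsEUBseq (μ : Ordinal.{0}) (f : Ordinal.{0} → Ordinal.{0} → Ordinal.{0})
    (g : Ordinal.{0} → Ordinal.{0}) : Prop :=
  IsLUBseq A I μ f g ∧ ∀ h : Ordinal.{0} → Ordinal.{0}, ltI A I h g →
    ∃ ξ < μ, leI A I h (f ξ)

/-- `Good_θ` : the sequence has an `I`-exact upper bound `g` with
`{a ∈ A : cf (g a) < θ} ∈ I`. -/
def GoodAt (μ : Ordinal.{0}) (f : Ordinal.{0} → Ordinal.{0} → Ordinal.{0})
    (θ : Cardinal.{0}) : Prop :=
  ∃ g : Ordinal.{0} → Ordinal.{0}, IsEUBseq A I μ f g ∧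
    {a | a ∈ A ∧ Ordinal.cof (g a) < θ} ∈ I

/-- `Bad_θ` : there are sets `S a` of size `< θ` and an ultrafilter `D` disjoint from `I`
such that for each `ξ < μ` some `h ∈ ∏ S a` is sandwiched `f ξ <_D h <_D f η`. -/
def BadAt (μ : Ordinal.{0}) (f : Ordinal.{0} → Ordinal.{0} → Ordinal.{0})
    (θ : Cardinal.{0}) : Prop :=
  ∃ S : Ordinal.{0} → Set Ordinal.{0}, ∃ D : Set (Set Ordinal.{0}),
    (∀ a ∈ A, Cardinal.mk (S a) < Cardinal.lift.{1} θ) ∧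
    IsUltrafilterOn A D ∧ D ∩ I = ∅ ∧
    ∀ ξ < μ, ∃ h : Ordinal.{0} → Ordinal.{0}, (∀ a ∈ A, h a ∈ S a) ∧
      ∃ η < μ, ltD A D (f ξ) h ∧ ltD A D h (f η)

/-- `Ugly` : there is `g : A → ON` such that the sets `t ξ = {a ∈ A : f ξ a > g a}`
do not stabilize modulo `I`. -/
def IsUgly (μ : Ordinal.{0}) (f : Ordinal.{0} → Ordinal.{0} → Ordinal.{0}) : Prop :=
  ∃ g : Ordinal.{0} → Ordinal.{0}, ∀ ξ < μ, ∃ η, ξ < η ∧ η < μ ∧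
    ({a | a ∈ A ∧ g a < f η a} \ {a | a ∈ A ∧ g a < f ξ a}) ∉ I

/-- `I` is `θ`-regular : any `θ`-sequence of `I`-positive sets admits a subfamily of
full size `θ` with nonempty intersection. -/
def ThetaRegular (θ : Cardinal.{0}) : Prop :=
  ∀ As : Ordinal.{0} → Set Ordinal.{0}, (∀ i < θ.ord, IsPositive A I (As i)) →
    ∃ H : Set Ordinal.{0}, H ⊆ Set.Iio θ.ord ∧
      Cardinal.mk H = Cardinal.lift.{1} θ ∧ (⋂ i ∈ H, As i).Nonempty

/-- `reg I` : the least regular `θ` such that `I` is `θ`-regular. -/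
def regI : Cardinal.{0} :=
  sInf {θ : Cardinal.{0} | θ.IsRegular ∧ ThetaRegular A I θ}

/-- `I` is weakly `θ`-saturated : there is no partition of `A` into `θ` many
`I`-positive sets. -/
def WeaklySaturated (θ : Cardinal.{0}) : Prop :=
  ¬ ∃ P : Ordinal.{0} → Set Ordinal.{0},
    (∀ i < θ.ord, IsPositive A I (P i)) ∧
    (∀ i < θ.ord, ∀ j < θ.ord, i ≠ j → Disjoint (P i) (P j)) ∧
    (⋃ i ∈ Set.Iio θ.ord, P i) = A

/-- `wsat I` : the least `θ` such that `I` is weakly `θ`-saturated. -/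
def wsat : Cardinal.{0} :=
  sInf {θ : Cardinal.{0} | WeaklySaturated A I θ}

/-- `I` is `θ`-indecomposable : closed under unions of `⊆`-increasing chains of
length `θ`. -/
def Indecomposable (θ : Cardinal.{0}) : Prop :=
  ∀ B : Ordinal.{0} → Set Ordinal.{0},
    (∀ i < θ.ord, B i ∈ I) →
    (∀ i < θ.ord, ∀ j < θ.ord, i ≤ j → B i ⊆ B j) →
    (⋃ i ∈ Set.Iio θ.ord, B i) ∈ I

/-- `⟨f ξ : ξ ∈ X⟩` is strongly increasing : there are sets `Z ξ ∈ I` witnessing the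
increase everywhere outside of them. -/
def StronglyIncreasing (X : Set Ordinal.{0})
    (f : Ordinal.{0} → Ordinal.{0} → Ordinal.{0}) : Prop :=
  ∃ Z : Ordinal.{0} → Set Ordinal.{0}, (∀ ξ ∈ X, Z ξ ∈ I) ∧
    ∀ η ∈ X, ∀ ξ ∈ X, η < ξ → ∀ a ∈ A \ (Z η ∪ Z ξ), f η a < f ξ a

/-- `(*)_θ` : every unbounded `X ⊆ μ` has a subset of size `θ` on which the sequence is
strongly increasing. -/
def Star (μ : Ordinal.{0}) (θ : Cardinal.{0})
    (f : Ordinal.{0} → Ordinal.{0} → Ordinal.{0}) : Prop :=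
  ∀ X : Set Ordinal.{0}, X ⊆ Set.Iio μ → (∀ α < μ, ∃ ξ ∈ X, α ≤ ξ) →
    ∃ X₀, X₀ ⊆ X ∧ Cardinal.mk X₀ = Cardinal.lift.{1} θ ∧
      StronglyIncreasing A I X₀ f

/-- `E` is a club (closed unbounded) subset of `δ`. -/
def IsClubIn (E : Set Ordinal.{0}) (δ : Ordinal.{0}) : Prop :=
  E ⊆ Set.Iio δ ∧ (∀ α < δ, ∃ β ∈ E, α ≤ β) ∧
  (∀ β < δ, β ≠ 0 → (∀ γ < β, ∃ ε ∈ E, γ < ε ∧ ε < β) → β ∈ E)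

/-- `A` is a set of regular cardinals. -/
def IsRegularCardSet : Prop :=
  ∀ a ∈ A, ∃ c : Cardinal.{0}, c.IsRegular ∧ c.ord = a

/-- `∏ A` : the set of functions `f` with `f a ∈ a` for every `a ∈ A`. -/
def prodSet : Set (Ordinal.{0} → Ordinal.{0}) :=
  {f | ∀ a ∈ A, f a < a}

/-- `(∏ A, ≤_J)` is `λ`-directed : every subset of `∏ A` of cardinality `< λ` has a
`≤_J`-upper bound in `∏ A`. -/
def DirectedMod (lam : Cardinal.{0}) : Prop :=
  ∀ F : Set (Ordinal.{0} → Ordinal.{0}), F ⊆ prodSet A →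
    Cardinal.mk F < Cardinal.lift.{1} lam →
    ∃ g ∈ prodSet A, ∀ f ∈ F, leI A I f g

/-- `cf (∏ A / D)` : the least cardinality of a cofinal subfamily of `∏ A` modulo `D`. -/
def cfProd (D : Set (Set Ordinal.{0})) : Cardinal.{0} :=
  sInf {c : Cardinal.{0} | ∃ F : Ordinal.{0} → Ordinal.{0} → Ordinal.{0},
    (∀ i < c.ord, F i ∈ prodSet A) ∧
    ∀ g ∈ prodSet A, ∃ i < c.ord, leD A D g (F i)}

/-- `pcf_I (A)` : the set of cofinalities `cf (∏ A / D)` for ultrafilters `D` on `A`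
disjoint from `I`. -/
def pcf : Set Cardinal.{0} :=
  {c | ∃ D, IsUltrafilterOn A D ∧ D ∩ I = ∅ ∧ cfProd A D = c}

/-- The ideal `J_{<λ}^I [A]`. -/
def Jlt (lam : Cardinal.{0}) : Set (Set Ordinal.{0}) :=
  {B | B ⊆ A ∧ (B ∈ I ∨
    ∀ D, IsUltrafilterOn A D → D ∩ I = ∅ → B ∈ D → cfProd A D < lam)}

/-- The ideal generated by `J ∪ {B}` (on subsets of `A`). -/
def generatedBy (J : Set (Set Ordinal.{0})) (B : Set Ordinal.{0}) :
    Set (Set Ordinal.{0}) :=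
  {X | X ⊆ A ∧ ∃ Y ∈ J, X ⊆ Y ∪ B}

/-- `cf (∏ A / I)` : least cardinality of a `≤_I`-cofinal subfamily of `∏ A`. -/
def cfProdI : Cardinal.{0} :=
  sInf {c : Cardinal.{0} | ∃ F : Ordinal.{0} → Ordinal.{0} → Ordinal.{0},
    (∀ i < c.ord, F i ∈ prodSet A) ∧
    ∀ g ∈ prodSet A, ∃ i < c.ord, leI A I g (F i)}

/-- A universal cofinal sequence for `λ ∈ pcf_I (A)`. -/
def IsUniversalSequence (lam : Cardinal.{0})
    (f : Ordinal.{0} → Ordinal.{0} → Ordinal.{0}) : Prop :=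
  (∀ ξ < lam.ord, f ξ ∈ prodSet A) ∧
  IncreasingModI A (Jlt A I lam) lam.ord f ∧
  ∀ D, IsUltrafilterOn A D → D ∩ I = ∅ → cfProd A D = lam →
    ∀ g ∈ prodSet A, ∃ ξ < lam.ord, leD A D g (f ξ)


/-- if the sequence is not ugly, every least upper bound is exact. -/
theorem lub_is_eub_of_not_ugly (A : Set Ordinal.{0}) (I : Set (Set Ordinal.{0}))
    (hI : IsIdealOn A I) (lam : Cardinal.{0}) (hlam : lam.IsRegular)
    (f : Ordinal.{0} → Ordinal.{0} → Ordinal.{0})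
    (hf : IncreasingModI A I lam.ord f)
    (hnotugly : ¬ IsUgly A I lam.ord f) :
    ∀ g : Ordinal.{0} → Ordinal.{0},
      IsLUBseq A I lam.ord f g → IsEUBseq A I lam.ord f g := by
  intro g hg
  refine ⟨hg, ?_⟩
  intro h hhg
  -- transitivity of ≤_I and ltI → leI
  have htrans : ∀ p q r : Ordinal.{0} → Ordinal.{0},
      leI A I p q → leI A I q r → leI A I p r := by
    intro p q r h1 h2
    refine hI.mem_of_subset _ (hI.union_mem _ h1 _ h2) _ ?_
    rintro a ⟨haA, hab⟩
    by_cases hc : p a ≤ q a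
    · exact Or.inr ⟨haA, fun hle => hab (hc.trans hle)⟩
    · exact Or.inl ⟨haA, hc⟩
  have hlt_le : ∀ p q : Ordinal.{0} → Ordinal.{0}, ltI A I p q → leI A I p q := by
    intro p q hpq
    refine hI.mem_of_subset _ hpq _ ?_
    rintro a ⟨haA, hab⟩
    exact ⟨haA, fun hlt => hab hlt.le⟩
  -- extract stabilization point from non-ugliness with witness h
  have hnu : ¬ ∀ ξ < lam.ord, ∃ η, ξ < η ∧ η < lam.ord ∧
      ({a | a ∈ A ∧ h a < f η a} \ {a | a ∈ A ∧ h a < f ξ a}) ∉ I :=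
    fun hc => hnotugly ⟨h, hc⟩
  push_neg at hnu
  obtain ⟨ξ₀, hξ₀, hstab⟩ := hnu
  have hsucc : ξ₀ + 1 < lam.ord := by
    have := (Cardinal.isSuccLimit_ord hlam.aleph0_le).succ_lt hξ₀
    simpa [Order.succ] using this
  set g' : Ordinal.{0} → Ordinal.{0} := fun a => if h a < f ξ₀ a then g a else h a
    with hg'def
  -- g' is an upper bound of the sequence above ξ₀
  have hub_gt : ∀ η, ξ₀ < η → η < lam.ord → leI A I (f η) g' := by
    intro η hlt hη
    have hsub : {a | a ∈ A ∧ ¬ f η a ≤ g' a} ⊆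
        {a | a ∈ A ∧ ¬ f η a ≤ g a} ∪
        ({a | a ∈ A ∧ h a < f η a} \ {a | a ∈ A ∧ h a < f ξ₀ a}) := by
      rintro a ⟨haA, hab⟩
      by_cases hc : h a < f ξ₀ a
      · exact Or.inl ⟨haA, by simpa [g', hc] using hab⟩
      · refine Or.inr ⟨⟨haA, ?_⟩, fun hm => hc hm.2⟩
        have hnle : ¬ f η a ≤ h a := by simpa [g', hc] using hab
        exact lt_of_not_ge hnle
    exact hI.mem_of_subset _ (hI.union_mem _ (hg.1 η hη) _ (hstab η hlt hη)) _ hsub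
  -- hence an upper bound of the whole sequence
  have hub : IsUBseq A I lam.ord f g' := by
    intro η hη
    rcases lt_or_ge ξ₀ η with hc | hc
    · exact hub_gt η hc hη
    · have hη' : η < ξ₀ + 1 := lt_of_le_of_lt hc (lt_add_one ξ₀)
      exact htrans _ _ _ (hlt_le _ _ (hf η hη (ξ₀ + 1) hsucc hη'))
        (hub_gt (ξ₀ + 1) (lt_add_one ξ₀) hsucc)
  have hle : leI A I g g' := hg.2 g' hub
  refine ⟨ξ₀, hξ₀, ?_⟩
  -- conclude h ≤_I f ξ₀
  have hsub : {a | a ∈ A ∧ ¬ h a ≤ f ξ₀ a} ⊆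
      {a | a ∈ A ∧ ¬ g a ≤ g' a} ∪ {a | a ∈ A ∧ ¬ h a < g a} := by
    rintro a ⟨haA, hab⟩
    have hc : ¬ h a < f ξ₀ a := fun hlt => hab hlt.le
    by_cases hd : g a ≤ g' a
    · refine Or.inr ⟨haA, fun hlt => ?_⟩
      have hgh : g' a = h a := by simp [g', hc]
      exact absurd (hd.trans_eq hgh) (not_le.mpr hlt)
    · exact Or.inl ⟨haA, hd⟩
  exact hI.mem_of_subset _ (hI.union_mem _ hle _ hhg) _ hsub

end PCFPaper
end
end

section
/- Let A be a set of ordinals and I an ideal on A. Suppose λ and θ ≤ λ are regular cardinals and f⃗ = ⟨f_ξ : ξ < λ⟩ is a <_I-increasing sequence of functions from A to the ordinals. If f⃗ has an I-exact upper bound f such that {a ∈ A : cf(f(a)) < θ} ∉ I, then f⃗ satisfies Bad_θ. -/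
noncomputable section

namespace PCFPaper

open Set

variable (A : Set Ordinal.{0}) (I : Set (Set Ordinal.{0}))

/-- an exact upper bound with `{a ∈ A : cf (g a) < θ} ∉ I` yields `Bad_θ`. -/
theorem bad_of_eub_small_cof (A : Set Ordinal.{0}) (I : Set (Set Ordinal.{0}))
    (hI : IsIdealOn A I) (lam θ : Cardinal.{0})
    (hlam : lam.IsRegular) (hθ : θ.IsRegular) (hθlam : θ ≤ lam)
    (f : Ordinal.{0} → Ordinal.{0} → Ordinal.{0})
    (hf : IncreasingModI A I lam.ord f)
    (g : Ordinal.{0} → Ordinal.{0}) (hg : IsEUBseq A I lam.ord f g)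
    (hpos : {a | a ∈ A ∧ Ordinal.cof (g a) < θ} ∉ I) :
    BadAt A I lam.ord f θ := by
  classical
  obtain ⟨⟨hub, _⟩, hexact⟩ := hg
  have hlamlim : Order.IsSuccLimit (lam.ord) := Cardinal.isSuccLimit_ord (hθ.aleph0_le.trans hθlam)
  have hsucc : ∀ ξ < lam.ord, ξ + 1 < lam.ord := by
    intro ξ hξ
    rw [Ordinal.add_one_eq_succ]
    exact hlamlim.succ_lt hξ
  have hltsucc : ∀ ξ : Ordinal.{0}, ξ < ξ + 1 := by
    intro ξ; rw [Ordinal.add_one_eq_succ]; exact Order.lt_succ ξ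
  -- sets where ¬ f ξ < g are in I
  have hZ : ∀ ξ < lam.ord, {a | a ∈ A ∧ ¬ f ξ a < g a} ∈ I := by
    intro ξ hξ
    have h1 : ltI A I (f ξ) (f (ξ + 1)) := hf ξ hξ (ξ + 1) (hsucc ξ hξ) (hltsucc ξ)
    have h2 : leI A I (f (ξ + 1)) g := hub (ξ + 1) (hsucc ξ hξ)
    refine hI.mem_of_subset _ (hI.union_mem _ h1 _ h2) _ ?_
    intro a ⟨haA, hag⟩
    by_cases h3 : f ξ a < f (ξ + 1) a
    · exact Or.inr ⟨haA, fun h4 => hag (lt_of_lt_of_le h3 h4)⟩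
    · exact Or.inl ⟨haA, h3⟩
  set Z0 : Set Ordinal.{0} := {a | a ∈ A ∧ ¬ f 0 a < g a} with hZ0def
  have hZ0 : Z0 ∈ I := hZ 0 hlamlim.pos
  set B' : Set Ordinal.{0} := {a | a ∈ A ∧ Ordinal.cof (g a) < θ} \ Z0 with hB'def
  have hB'A : B' ⊆ A := fun a ha => ha.1.1
  have hB'pos : B' ∉ I := by
    intro h
    apply hpos
    refine hI.mem_of_subset _ (hI.union_mem _ h _ hZ0) _ ?_
    intro a ha
    by_cases h2 : a ∈ Z0
    · exact Or.inr h2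
    · exact Or.inl ⟨ha, h2⟩
  have hgpos : ∀ a ∈ B', 0 < g a := by
    intro a ha
    by_contra h
    exact ha.2 ⟨ha.1.1, fun h2 => h (lt_of_le_of_lt zero_le h2)⟩
  -- cofinal small sets
  have hS : ∀ a ∈ B', ∃ S : Set Ordinal.{0}, S.Nonempty ∧ (∀ s ∈ S, s < g a) ∧
      (∀ β < g a, ∃ s ∈ S, β ≤ s) ∧ Cardinal.mk S < Cardinal.lift.{1} θ := by
    intro a ha
    obtain ⟨ι, F, hF, hmk⟩ := Ordinal.exists_lsub_cof (g a)
    have hcof : ∀ β < g a, ∃ s ∈ Set.range F, β ≤ s := by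
      intro β hβ
      rw [← hF] at hβ
      obtain ⟨i, hi⟩ := Ordinal.lt_lsub_iff.1 hβ
      exact ⟨F i, Set.mem_range_self i, hi⟩
    obtain ⟨s0, hs0, -⟩ := hcof 0 (hgpos a ha)
    refine ⟨Set.range F, ⟨s0, hs0⟩, ?_, hcof, ?_⟩
    · rintro s ⟨i, rfl⟩
      rw [← hF]
      exact Ordinal.lt_lsub F i
    · calc Cardinal.mk (Set.range F) ≤ Cardinal.lift.{1} (Cardinal.mk ι) := by
            simpa using Cardinal.mk_range_le_lift (f := F)
        _ = Cardinal.lift.{1} (Ordinal.cof (g a)) := by rw [hmk]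
        _ < Cardinal.lift.{1} θ := Cardinal.lift_lt.2 ha.1.2
  set S : Ordinal.{0} → Set Ordinal.{0} :=
    fun a => if h : a ∈ B' then (hS a h).choose else {0} with hSdef
  have hSspec : ∀ a (h : a ∈ B'), (S a).Nonempty ∧ (∀ s ∈ S a, s < g a) ∧
      (∀ β < g a, ∃ s ∈ S a, β ≤ s) ∧ Cardinal.mk (S a) < Cardinal.lift.{1} θ := by
    intro a h
    simp only [hSdef, dif_pos h]
    exact (hS a h).choose_spec
  have hSout : ∀ a, a ∉ B' → S a = {0} := by
    intro a h; simp only [hSdef, dif_neg h]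
  -- the filter generated by B' and complements of I-sets
  let F : Filter Ordinal.{0} :=
    { sets := {Y | ∃ X ∈ I, B' \ X ⊆ Y}
      univ_sets := ⟨∅, hI.empty_mem, by simp⟩
      sets_of_superset := fun ⟨X, hX, hXY⟩ hYZ => ⟨X, hX, hXY.trans hYZ⟩
      inter_sets := by
        rintro Y Z ⟨X1, h1, s1⟩ ⟨X2, h2, s2⟩
        refine ⟨X1 ∪ X2, hI.union_mem _ h1 _ h2, ?_⟩
        intro a ha
        exact ⟨s1 ⟨ha.1, fun h => ha.2 (Or.inl h)⟩, s2 ⟨ha.1, fun h => ha.2 (Or.inr h)⟩⟩ }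
  haveI hFne : F.NeBot := by
    rw [Filter.neBot_iff]
    intro h
    have : (∅ : Set Ordinal.{0}) ∈ F.sets := by rw [h]; trivial
    obtain ⟨X, hX, hsub⟩ := this
    exact hB'pos (hI.mem_of_subset _ hX _ (fun a ha => by
      by_contra h2
      exact (hsub ⟨ha, h2⟩)))
  let U : Ultrafilter Ordinal.{0} := Ultrafilter.of F
  have hUF : ∀ Y : Set Ordinal.{0}, (∃ X ∈ I, B' \ X ⊆ Y) → Y ∈ U := by
    intro Y hY
    exact Ultrafilter.of_le F hY
  have hAU : A ∈ U := hUF A ⟨∅, hI.empty_mem, fun a ha => hB'A ha.1⟩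
  set D : Set (Set Ordinal.{0}) := {X | X ⊆ A ∧ X ∈ U} with hDdef
  have hDuf : IsUltrafilterOn A D := by
    constructor
    · exact fun X hX => hX.1
    · exact ⟨subset_rfl, hAU⟩
    · intro h
      exact Filter.empty_notMem (U : Filter Ordinal.{0}) h.2
    · exact fun X hX Y hXY hYA => ⟨hYA, Filter.mem_of_superset hX.2 hXY⟩
    · exact fun X hX Y hY => ⟨fun a ha => hX.1 ha.1, Filter.inter_mem hX.2 hY.2⟩
    · intro X hXA
      rcases Ultrafilter.mem_or_compl_mem U X with h | h
      · exact Or.inl ⟨hXA, h⟩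
      · refine Or.inr ⟨Set.diff_subset, ?_⟩
        have : A \ X = A ∩ Xᶜ := rfl
        rw [this]
        exact Filter.inter_mem hAU h
  have hDI : D ∩ I = ∅ := by
    rw [Set.eq_empty_iff_forall_notMem]
    rintro X ⟨hXD, hXI⟩
    have h1 : A \ X ∈ U := hUF _ ⟨X, hXI, fun a ha => ⟨hB'A ha.1, ha.2⟩⟩
    have h2 : X ∩ (A \ X) ∈ U := Filter.inter_mem hXD.2 h1
    have h3 : X ∩ (A \ X) = ∅ := by
      rw [Set.eq_empty_iff_forall_notMem]
      rintro a ⟨ha1, ha2⟩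
      exact ha2.2 ha1
    rw [h3] at h2
    exact Filter.empty_notMem (U : Filter Ordinal.{0}) h2
  refine ⟨S, D, ?_, hDuf, hDI, ?_⟩
  · intro a haA
    by_cases h : a ∈ B'
    · exact (hSspec a h).2.2.2
    · rw [hSout a h]
      rw [Cardinal.mk_singleton]
      have h1 : Cardinal.lift.{1} 1 < Cardinal.lift.{1} θ :=
        Cardinal.lift_lt.2 (lt_of_lt_of_le Cardinal.one_lt_aleph0 hθ.aleph0_le)
      rwa [Cardinal.lift_one] at h1
  · intro ξ hξ
    have hξ1 : ξ + 1 < lam.ord := hsucc ξ hξ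
    -- define h
    set h : Ordinal.{0} → Ordinal.{0} := fun a =>
      if ha : a ∈ B' then
        (if h2 : f (ξ + 1) a < g a then ((hSspec a ha).2.2.1 _ h2).choose
         else (hSspec a ha).1.choose)
      else 0 with hhdef
    have hhS : ∀ a ∈ A, h a ∈ S a := by
      intro a _
      by_cases ha : a ∈ B'
      · simp only [hhdef, dif_pos ha]
        by_cases h2 : f (ξ + 1) a < g a
        · rw [dif_pos h2]; exact ((hSspec a ha).2.2.1 _ h2).choose_spec.1
        · rw [dif_neg h2]; exact (hSspec a ha).1.choose_spec
      · simp only [hhdef, dif_neg ha, hSout a ha]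
        rfl
    have hhlt : ∀ a ∈ B', h a < g a := by
      intro a ha
      exact (hSspec a ha).2.1 _ (hhS a (hB'A ha))
    have hhge : ∀ a (ha : a ∈ B'), f (ξ + 1) a < g a → f (ξ + 1) a ≤ h a := by
      intro a ha h2
      simp only [hhdef, dif_pos ha, dif_pos h2]
      exact ((hSspec a ha).2.2.1 _ h2).choose_spec.2
    have hhg : ltI A I h g := by
      refine hI.mem_of_subset _ hZ0 _ ?_
      rintro a ⟨haA, hag⟩
      by_cases ha : a ∈ B'
      · exact absurd (hhlt a ha) hag
      · have h0 : h a = 0 := by simp only [hhdef, dif_neg ha]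
        rw [h0] at hag
        exact ⟨haA, fun h2 => hag (lt_of_le_of_lt zero_le h2)⟩
    obtain ⟨η, hη, hle⟩ := hexact h hhg
    refine ⟨h, hhS, η + 1, hsucc η hη, ?_, ?_⟩
    · -- f ξ <_D h
      have hW1 : {a | a ∈ A ∧ ¬ f ξ a < f (ξ + 1) a} ∈ I :=
        hf ξ hξ (ξ + 1) hξ1 (hltsucc ξ)
      have hW2 : {a | a ∈ A ∧ ¬ f (ξ + 1) a < g a} ∈ I := hZ (ξ + 1) hξ1
      refine ⟨fun a ha => ha.1, ?_⟩
      refine Filter.mem_of_superset (hUF _ ⟨_, hI.union_mem _ hW1 _ hW2, subset_rfl⟩) ?_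
      rintro a ⟨ha, hna⟩
      have haA : a ∈ A := hB'A ha
      have h1 : f ξ a < f (ξ + 1) a := by
        by_contra h2; exact hna (Or.inl ⟨haA, h2⟩)
      have h2 : f (ξ + 1) a < g a := by
        by_contra h2; exact hna (Or.inr ⟨haA, h2⟩)
      exact ⟨haA, lt_of_lt_of_le h1 (hhge a ha h2)⟩
    · -- h <_D f (η+1)
      have hV1 : {a | a ∈ A ∧ ¬ h a ≤ f η a} ∈ I := hle
      have hV2 : {a | a ∈ A ∧ ¬ f η a < f (η + 1) a} ∈ I :=
        hf η hη (η + 1) (hsucc η hη) (hltsucc η)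
      refine ⟨fun a ha => ha.1, ?_⟩
      refine Filter.mem_of_superset
        (hUF _ ⟨_, hI.union_mem _ hV1 _ hV2, subset_rfl⟩) ?_
      rintro a ⟨ha, hna⟩
      have haA : a ∈ A := hB'A ha
      have h1 : h a ≤ f η a := by
        by_contra h2; exact hna (Or.inl ⟨haA, h2⟩)
      have h2 : f η a < f (η + 1) a := by
        by_contra h2; exact hna (Or.inr ⟨haA, h2⟩)
      exact ⟨haA, lt_of_le_of_lt h1 h2⟩


end PCFPaper
end
end

section
/- Let I be an ideal on a set A and θ a regular cardinal. The following are equivalent: (1) I is weakly θ-saturated and θ-indecomposable; (2) whenever ⟨B_i : i < θ⟩ is a ⊆-increasing θ-sequence of subsets of A, there is j* < θ such that for all j with j* ≤ j < θ, B_j =_I ⋃_{i<θ} B_i; (3) whenever ⟨A_i : i < θ⟩ is a sequence of I-positive sets, there is H ⊆ θ with |H| = θ such that ⋂_{i∈H} A_i ≠ ∅. -/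
noncomputable section

namespace PCFPaper

open Set

variable (A : Set Ordinal.{0}) (I : Set (Set Ordinal.{0}))

section Aux

private lemma bounded_of_small {θ : Cardinal.{0}} (hθ : θ.IsRegular)
    {s : Set Ordinal.{0}} (hs : s ⊆ Set.Iio θ.ord)
    (hcard : Cardinal.mk s < Cardinal.lift.{1} θ) :
    ∃ β < θ.ord, ∀ x ∈ s, x < β := by
  obtain ⟨c, hc, hlift⟩ := Cardinal.lt_lift_iff.mp hcard
  have he : Nonempty (c.out ≃ s) := by
    rw [← Cardinal.mk_out c] at hlift
    exact Cardinal.lift_mk_eq'.mp (by simpa using hlift)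
  obtain ⟨e⟩ := he
  set f : c.out → Ordinal.{0} := fun i => (e i).1 with hf
  have hsup : iSup f < θ.ord := by
    apply Ordinal.iSup_lt_ord
    · rwa [Cardinal.mk_out, hθ.cof_eq]
    · intro i; exact hs (e i).2
  refine ⟨iSup f + 1, ?_, ?_⟩
  · rw [Ordinal.add_one_eq_succ]
    exact (Cardinal.isSuccLimit_ord hθ.aleph0_le).succ_lt hsup
  · intro x hx
    have h1 : x = f (e.symm ⟨x, hx⟩) := by simp [hf]
    have h2 : f (e.symm ⟨x, hx⟩) ≤ iSup f := Ordinal.le_iSup f _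
    rw [← h1] at h2
    exact h2.trans_lt (lt_add_one _)

private lemma aux12x {A : Set Ordinal.{0}} {I : Set (Set Ordinal.{0})} {θ : Cardinal.{0}}
    (hI : IsIdealOn A I) (hθ : θ.IsRegular)
    (hws : WeaklySaturated A I θ) (hin : Indecomposable I θ)
    (B : Ordinal.{0} → Set Ordinal.{0})
    (hBA : ∀ i < θ.ord, B i ⊆ A)
    (hmono : ∀ i < θ.ord, ∀ j < θ.ord, i ≤ j → B i ⊆ B j) :
    ∃ j' < θ.ord, ∀ j, j' ≤ j → j < θ.ord →
      EqModI I (B j) (⋃ i ∈ Set.Iio θ.ord, B i) := by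
  classical
  set U := ⋃ i ∈ Set.Iio θ.ord, B i with hUdef
  by_contra hcon
  push_neg at hcon
  have hord := Cardinal.isSuccLimit_ord hθ.aleph0_le
  have hθ0 : (0 : Ordinal.{0}) < θ.ord := hord.pos
  have hUB : ∀ j < θ.ord, B j ⊆ U := fun j hj x hx => mem_iUnion₂.mpr ⟨j, hj, hx⟩
  have hpos : ∀ j < θ.ord, U \ B j ∉ I := by
    intro j hj hmem
    obtain ⟨j2, hle, hj2, hne⟩ := hcon j hj
    apply hne
    have h1 : B j2 \ U = ∅ := by rw [Set.diff_eq_empty]; exact hUB j2 hj2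
    have h2 : (B j2 \ U) ∪ (U \ B j2) ⊆ U \ B j := by
      rw [h1, Set.empty_union]
      exact Set.diff_subset_diff_right (hmono j hj j2 hj2 hle)
    exact hI.mem_of_subset _ hmem _ h2
  have hUdiff : ∀ j, (⋃ i ∈ Set.Iio θ.ord, (B i \ B j)) = U \ B j := by
    intro j
    apply subset_antisymm
    · intro x hx
      obtain ⟨i, hi, hxi⟩ := mem_iUnion₂.mp hx
      exact ⟨hUB i hi hxi.1, hxi.2⟩
    · intro x hx
      obtain ⟨i, hi, hxi⟩ := mem_iUnion₂.mp hx.1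
      exact mem_iUnion₂.mpr ⟨i, hi, hxi, hx.2⟩
  have hnext : ∀ j < θ.ord, ∃ i, i < θ.ord ∧ B i \ B j ∉ I := by
    intro j hj
    by_contra hb
    push_neg at hb
    apply hpos j hj
    rw [← hUdiff j]
    exact hin (fun i => B i \ B j) (fun i hi => hb i hi)
      (fun i hi i2 hi2 h => Set.diff_subset_diff_left (hmono i hi i2 hi2 h))
  set nxt : Ordinal.{0} → Ordinal.{0} :=
    fun j => sInf {i | i < θ.ord ∧ B i \ B j ∉ I} with hnxtdef
  have hnxtspec : ∀ j < θ.ord, nxt j < θ.ord ∧ B (nxt j) \ B j ∉ I ∧ j < nxt j := by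
    intro j hj
    have hne : {i | i < θ.ord ∧ B i \ B j ∉ I}.Nonempty := by
      obtain ⟨i, h1, h2⟩ := hnext j hj; exact ⟨i, h1, h2⟩
    have hmem := csInf_mem hne
    refine ⟨hmem.1, hmem.2, ?_⟩
    by_contra hle
    push_neg at hle
    apply hmem.2
    have hempty : B (nxt j) \ B j = ∅ := by
      rw [Set.diff_eq_empty]; exact hmono _ hmem.1 _ hj hle
    rw [hempty]
    exact hI.empty_mem
  set E : Ordinal.{0} → Ordinal.{0} := fun o => Ordinal.limitRecOn o 0 (fun _ ih => nxt ih)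
      (fun o _ ih => Ordinal.bsup o ih) with hEdef
  have hE0 : E 0 = 0 := Ordinal.limitRecOn_zero _ _ _
  have hEsucc : ∀ o, E (Order.succ o) = nxt (E o) := fun o => Ordinal.limitRecOn_succ _ _ _ _
  have hElim : ∀ o (h : Order.IsSuccLimit o), E o = Ordinal.bsup o (fun a _ => E a) :=
    fun o h => Ordinal.limitRecOn_limit _ _ _ _ h
  have hElt : ∀ ξ, ξ < θ.ord → E ξ < θ.ord := by
    intro ξ
    induction ξ using Ordinal.induction with
    | _ ξ IH =>
      intro hξ
      rcases Ordinal.zero_or_succ_or_isSuccLimit ξ with h0 | ⟨a, rfl⟩ | hlim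
      · rw [h0, hE0]; exact hθ0
      · rw [hEsucc]
        have ha : a < θ.ord := (Order.lt_succ a).trans hξ
        exact (hnxtspec _ (IH a (Order.lt_succ a) ha)).1
      · rw [hElim ξ hlim]
        exact Cardinal.bsup_lt_ord_of_isRegular hθ (Cardinal.lt_ord.mp hξ)
          (fun i hi => IH i hi (hi.trans hξ))
  have hEmono : ∀ ξ, ξ < θ.ord → ∀ η < ξ, E η < E ξ := by
    intro ξ
    induction ξ using Ordinal.induction with
    | _ ξ IH =>
      intro hξ η hη
      rcases Ordinal.zero_or_succ_or_isSuccLimit ξ with h0 | ⟨a, rfl⟩ | hlim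
      · exact absurd (h0 ▸ hη) (not_lt_zero (a := η))
      · rw [hEsucc]
        have ha : a < θ.ord := (Order.lt_succ a).trans hξ
        have hnx := (hnxtspec (E a) (hElt a ha)).2.2
        rcases lt_or_eq_of_le (Order.lt_succ_iff.mp hη) with h | h
        · exact (IH a (Order.lt_succ a) ha η h).trans hnx
        · rw [h]; exact hnx
      · rw [hElim ξ hlim]
        have hsη : Order.succ η < ξ := hlim.succ_lt hη
        have h1 : E η < E (Order.succ η) := by
          rw [hEsucc]
          exact (hnxtspec (E η) (hElt η (hη.trans hξ))).2.2
        exact h1.trans_le (Ordinal.le_bsup (fun a _ => E a) _ hsη)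
  set pc : Ordinal.{0} → Set Ordinal.{0} :=
    fun ξ => B (E (Order.succ ξ)) \ B (E ξ) with hpcdef
  have hsucclt : ∀ ξ, ξ < θ.ord → Order.succ ξ < θ.ord := fun ξ h => hord.succ_lt h
  have hpcpos : ∀ ξ, ξ < θ.ord → pc ξ ∉ I := by
    intro ξ hξ
    show B (E (Order.succ ξ)) \ B (E ξ) ∉ I
    rw [hEsucc]
    exact (hnxtspec (E ξ) (hElt ξ hξ)).2.1
  have hpcA : ∀ ξ, ξ < θ.ord → pc ξ ⊆ A :=
    fun ξ hξ => Set.diff_subset.trans (hBA _ (hElt _ (hsucclt ξ hξ)))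
  have hpcdisj : ∀ ξ, ξ < θ.ord → ∀ η, η < θ.ord → ξ < η → Disjoint (pc ξ) (pc η) := by
    intro ξ hξ η hη hlt
    rw [Set.disjoint_left]
    intro x hx1 hx2
    have hsle : Order.succ ξ ≤ η := Order.succ_le_of_lt hlt
    have hsub : B (E (Order.succ ξ)) ⊆ B (E η) := by
      rcases lt_or_eq_of_le hsle with h | h
      · exact hmono _ (hElt _ (hsucclt ξ hξ)) _ (hElt η hη) (le_of_lt (hEmono η hη _ h))
      · rw [h]
    exact hx2.2 (hsub hx1.1)
  set W := ⋃ η ∈ Set.Iio θ.ord, pc η with hWdef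
  have hWA : W ⊆ A := iUnion₂_subset fun η hη => hpcA η hη
  set P : Ordinal.{0} → Set Ordinal.{0} :=
    fun ξ => if ξ = 0 then pc 0 ∪ (A \ W) else pc ξ with hPdef
  have hP0 : P 0 = pc 0 ∪ (A \ W) := if_pos rfl
  have hPne : ∀ ξ, ξ ≠ 0 → P ξ = pc ξ := fun ξ h => if_neg h
  apply hws
  refine ⟨P, ?_, ?_, ?_⟩
  · intro ξ hξ
    by_cases h0 : ξ = 0
    · subst h0
      rw [hP0]
      refine ⟨Set.union_subset (hpcA 0 hθ0) Set.diff_subset, fun hmem => ?_⟩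
      exact hpcpos 0 hθ0 (hI.mem_of_subset _ hmem _ Set.subset_union_left)
    · rw [hPne ξ h0]
      exact ⟨hpcA ξ hξ, hpcpos ξ hξ⟩
  · have hdj0 : ∀ η, η < θ.ord → η ≠ 0 → Disjoint (P 0) (P η) := by
      intro η hη h0
      rw [hP0, hPne η h0]
      apply Set.disjoint_union_left.mpr
      constructor
      · exact hpcdisj 0 hθ0 η hη (pos_iff_ne_zero.mpr h0)
      · rw [Set.disjoint_left]
        intro x hx1 hx2
        exact hx1.2 (mem_iUnion₂.mpr ⟨η, hη, hx2⟩)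
    intro ξ hξ η hη hne
    by_cases h0 : ξ = 0
    · subst h0; exact hdj0 η hη (Ne.symm hne)
    · by_cases h0' : η = 0
      · subst h0'; exact (hdj0 ξ hξ hne).symm
      · rw [hPne ξ h0, hPne η h0']
        rcases hne.lt_or_gt with h | h
        · exact hpcdisj ξ hξ η hη h
        · exact (hpcdisj η hη ξ hξ h).symm
  · apply subset_antisymm
    · apply iUnion₂_subset
      intro ξ hξ
      by_cases h0 : ξ = 0
      · subst h0; rw [hP0]
        exact Set.union_subset (hpcA 0 hθ0) Set.diff_subset
      · rw [hPne ξ h0]; exact hpcA ξ hξ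
    · intro x hx
      by_cases hxW : x ∈ W
      · obtain ⟨η, hη, hxη⟩ := mem_iUnion₂.mp hxW
        by_cases h0 : η = 0
        · subst h0
          exact mem_iUnion₂.mpr ⟨0, hθ0, by rw [hP0]; exact Or.inl hxη⟩
        · exact mem_iUnion₂.mpr ⟨η, hη, by rw [hPne η h0]; exact hxη⟩
      · exact mem_iUnion₂.mpr ⟨0, hθ0, by rw [hP0]; exact Or.inr ⟨hx, hxW⟩⟩

private lemma aux21x {A : Set Ordinal.{0}} {I : Set (Set Ordinal.{0})} {θ : Cardinal.{0}}
    (hI : IsIdealOn A I) (hθ : θ.IsRegular)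
    (h2 : ∀ B : Ordinal.{0} → Set Ordinal.{0},
        (∀ i < θ.ord, B i ⊆ A) →
        (∀ i < θ.ord, ∀ j < θ.ord, i ≤ j → B i ⊆ B j) →
        ∃ j' < θ.ord, ∀ j, j' ≤ j → j < θ.ord →
          EqModI I (B j) (⋃ i ∈ Set.Iio θ.ord, B i)) :
    WeaklySaturated A I θ ∧ Indecomposable I θ := by
  constructor
  · rintro ⟨P, hpos, hdisj, huniv⟩
    set B : Ordinal.{0} → Set Ordinal.{0} :=
      fun j => ⋃ i ∈ Set.Iio θ.ord ∩ Set.Iio j, P i with hB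
    have hBA : ∀ i < θ.ord, B i ⊆ A := by
      intro i _ x hx
      obtain ⟨k, hk, hxk⟩ := mem_iUnion₂.mp hx
      exact (hpos k hk.1).1 hxk
    have hmono : ∀ i < θ.ord, ∀ j < θ.ord, i ≤ j → B i ⊆ B j := by
      intro i _ j _ hij x hx
      obtain ⟨k, hk, hxk⟩ := mem_iUnion₂.mp hx
      exact mem_iUnion₂.mpr ⟨k, ⟨hk.1, hk.2.trans_le hij⟩, hxk⟩
    obtain ⟨j', hj', hst⟩ := h2 B hBA hmono
    have hUeq : (⋃ i ∈ Set.Iio θ.ord, B i) = A := by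
      apply subset_antisymm
      · exact iUnion₂_subset fun i hi => hBA i hi
      · intro x hx
        rw [← huniv] at hx
        obtain ⟨i, hi, hxi⟩ := mem_iUnion₂.mp hx
        refine mem_iUnion₂.mpr ⟨Order.succ i, (Cardinal.isSuccLimit_ord hθ.aleph0_le).succ_lt hi, ?_⟩
        exact mem_iUnion₂.mpr ⟨i, ⟨hi, Order.lt_succ i⟩, hxi⟩
    have h := hst j' le_rfl hj'
    rw [hUeq] at h
    have hd : A \ B j' ∈ I := hI.mem_of_subset _ h _ Set.subset_union_right
    have hPj : P j' ⊆ A \ B j' := by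
      intro x hx
      refine ⟨(hpos j' hj').1 hx, fun hxB => ?_⟩
      obtain ⟨k, hk, hxk⟩ := mem_iUnion₂.mp hxB
      exact Set.disjoint_left.mp (hdisj k hk.1 j' hj' (ne_of_lt hk.2)) hxk hx
    exact (hpos j' hj').2 (hI.mem_of_subset _ hd _ hPj)
  · intro B hBI hmono
    have hBA : ∀ i < θ.ord, B i ⊆ A := fun i hi => hI.subset_of_mem _ (hBI i hi)
    obtain ⟨j', hj', hst⟩ := h2 B hBA hmono
    have h := hst j' le_rfl hj'
    have hUsub : (⋃ i ∈ Set.Iio θ.ord, B i) ⊆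
        B j' ∪ ((B j' \ (⋃ i ∈ Set.Iio θ.ord, B i)) ∪ ((⋃ i ∈ Set.Iio θ.ord, B i) \ B j')) := by
      intro x hx
      by_cases hxj : x ∈ B j'
      · exact Or.inl hxj
      · exact Or.inr (Or.inr ⟨hx, hxj⟩)
    exact hI.mem_of_subset _ (hI.union_mem _ (hBI j' hj') _ h) _ hUsub

private lemma aux23x {A : Set Ordinal.{0}} {I : Set (Set Ordinal.{0})} {θ : Cardinal.{0}}
    (hI : IsIdealOn A I) (hθ : θ.IsRegular)
    (h2 : ∀ B : Ordinal.{0} → Set Ordinal.{0},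
        (∀ i < θ.ord, B i ⊆ A) →
        (∀ i < θ.ord, ∀ j < θ.ord, i ≤ j → B i ⊆ B j) →
        ∃ j' < θ.ord, ∀ j, j' ≤ j → j < θ.ord →
          EqModI I (B j) (⋃ i ∈ Set.Iio θ.ord, B i)) :
    ThetaRegular A I θ := by
  intro As hpos
  by_contra hno
  push_neg at hno
  have hsmall : ∀ a : Ordinal.{0},
      Cardinal.mk {i | i < θ.ord ∧ a ∈ As i} < Cardinal.lift.{1} θ := by
    intro a
    set s : Set Ordinal.{0} := {i | i < θ.ord ∧ a ∈ As i} with hsdef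
    have hs : s ⊆ Set.Iio θ.ord := fun i hi => hi.1
    have hle : Cardinal.mk s ≤ Cardinal.lift.{1} θ := by
      have := (Cardinal.mk_le_mk_of_subset hs).trans_eq (Ordinal.mk_Iio_ordinal θ.ord)
      rwa [Cardinal.card_ord] at this
    rcases lt_or_eq_of_le hle with h | h
    · exact h
    · exfalso
      have hne := hno s hs h
      have : a ∈ ⋂ i ∈ s, As i := mem_iInter₂.mpr fun i hi => hi.2
      rw [hne] at this
      exact this
  set B : Ordinal.{0} → Set Ordinal.{0} :=
    fun j => A ∩ {a | ∀ i, i < θ.ord → a ∈ As i → i < j} with hBdef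
  have hBA : ∀ i < θ.ord, B i ⊆ A := fun i _ => Set.inter_subset_left
  have hmono : ∀ i < θ.ord, ∀ j < θ.ord, i ≤ j → B i ⊆ B j := by
    intro i _ j _ hij x hx
    exact ⟨hx.1, fun k hk hak => (hx.2 k hk hak).trans_le hij⟩
  have hUeq : (⋃ i ∈ Set.Iio θ.ord, B i) = A := by
    apply subset_antisymm
    · exact iUnion₂_subset fun i hi => hBA i hi
    · intro a ha
      obtain ⟨β, hβ, hbd⟩ := bounded_of_small hθ
        (fun i (hi : i ∈ {i | i < θ.ord ∧ a ∈ As i}) => hi.1) (hsmall a)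
      exact mem_iUnion₂.mpr ⟨β, hβ, ha, fun i hi hai => hbd i ⟨hi, hai⟩⟩
  obtain ⟨j', hj', hst⟩ := h2 B hBA hmono
  have h := hst j' le_rfl hj'
  rw [hUeq] at h
  have hd : A \ B j' ∈ I := hI.mem_of_subset _ h _ Set.subset_union_right
  have hP : As j' ⊆ A \ B j' := by
    intro a ha
    exact ⟨(hpos j' hj').1 ha, fun hB => absurd (hB.2 j' hj' ha) (lt_irrefl j')⟩
  exact (hpos j' hj').2 (hI.mem_of_subset _ hd _ hP)

private lemma aux31x {A : Set Ordinal.{0}} {I : Set (Set Ordinal.{0})} {θ : Cardinal.{0}}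
    (hI : IsIdealOn A I) (hθ : θ.IsRegular)
    (h3 : ThetaRegular A I θ) :
    WeaklySaturated A I θ ∧ Indecomposable I θ := by
  constructor
  · rintro ⟨P, hpos, hdisj, _⟩
    obtain ⟨H, hHsub, hHcard, x, hx⟩ := h3 P hpos
    have hnt : Nontrivial H := by
      have h1 : Cardinal.lift.{1,0} 1 < Cardinal.lift.{1,0} θ :=
        Cardinal.lift_lt.mpr (Cardinal.one_lt_aleph0.trans_le hθ.aleph0_le)
      rw [Cardinal.lift_one] at h1
      rw [← Cardinal.one_lt_iff_nontrivial, hHcard]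
      exact h1
    obtain ⟨⟨i, hi⟩, ⟨j, hj⟩, hne⟩ := hnt.exists_pair_ne
    have hij : i ≠ j := fun h => hne (Subtype.ext h)
    have hxi : x ∈ P i := by
      have := mem_iInter₂.mp hx; exact this i hi
    have hxj : x ∈ P j := by
      have := mem_iInter₂.mp hx; exact this j hj
    exact Set.disjoint_left.mp (hdisj i (hHsub hi) j (hHsub hj) hij) hxi hxj
  · intro B hBI hmono
    by_contra hU
    set U := ⋃ i ∈ Set.Iio θ.ord, B i with hUdef
    have hUA : U ⊆ A := iUnion₂_subset fun i hi => hI.subset_of_mem _ (hBI i hi)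
    have hpos : ∀ i < θ.ord, IsPositive A I (U \ B i) := by
      intro i hi
      refine ⟨Set.diff_subset.trans hUA, fun hmem => ?_⟩
      apply hU
      have hsub : U ⊆ B i ∪ (U \ B i) := by
        intro x hx
        by_cases h : x ∈ B i
        · exact Or.inl h
        · exact Or.inr ⟨hx, h⟩
      exact hI.mem_of_subset _ (hI.union_mem _ (hBI i hi) _ hmem) _ hsub
    obtain ⟨H, hHsub, hHcard, x, hx⟩ := h3 (fun i => U \ B i) hpos
    have hHne : H.Nonempty := by
      rw [Set.nonempty_iff_ne_empty]
      rintro rfl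
      rw [Cardinal.mk_emptyCollection] at hHcard
      have h0 : Cardinal.lift.{1,0} 0 < Cardinal.lift.{1,0} θ := Cardinal.lift_lt.mpr hθ.pos
      rw [Cardinal.lift_zero, ← hHcard] at h0
      exact lt_irrefl _ h0
    obtain ⟨i0, hi0⟩ := hHne
    have hxU : x ∈ U := (mem_iInter₂.mp hx i0 hi0).1
    obtain ⟨j0, hj0, hxj0⟩ := mem_iUnion₂.mp hxU
    have hexi : ∃ i ∈ H, j0 ≤ i := by
      by_contra hb
      push_neg at hb
      have hsub : H ⊆ Set.Iio j0 := fun i hi => hb i hi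
      have hle := (Cardinal.mk_le_mk_of_subset hsub).trans_eq (Ordinal.mk_Iio_ordinal j0)
      rw [hHcard, Cardinal.lift_le] at hle
      exact absurd (Cardinal.lt_ord.mp hj0) (not_lt.mpr hle)
    obtain ⟨i, hiH, hj0i⟩ := hexi
    exact (mem_iInter₂.mp hx i hiH).2 (hmono j0 hj0 i (hHsub hiH) hj0i hxj0)

end Aux


/-- equivalent characterizations of `θ`-regularity of an ideal. -/
theorem theta_regular_tfae (A : Set Ordinal.{0}) (I : Set (Set Ordinal.{0}))
    (hI : IsIdealOn A I) (θ : Cardinal.{0}) (hθ : θ.IsRegular) :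
    ((WeaklySaturated A I θ ∧ Indecomposable I θ) ↔
      (∀ B : Ordinal.{0} → Set Ordinal.{0},
        (∀ i < θ.ord, B i ⊆ A) →
        (∀ i < θ.ord, ∀ j < θ.ord, i ≤ j → B i ⊆ B j) →
        ∃ j' < θ.ord, ∀ j, j' ≤ j → j < θ.ord →
          EqModI I (B j) (⋃ i ∈ Set.Iio θ.ord, B i))) ∧
    ((WeaklySaturated A I θ ∧ Indecomposable I θ) ↔ ThetaRegular A I θ) := by
  constructor
  · exact ⟨fun h => aux12x hI hθ h.1 h.2, fun h2 => aux21x hI hθ h2⟩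
  · exact ⟨fun h => aux23x hI hθ (aux12x hI hθ h.1 h.2), fun h3 => aux31x hI hθ h3⟩

end PCFPaper
end
end

section
/- Let A be a set of ordinals and I an ideal on A with reg(I) < min(A). Let λ > reg(I) be a regular cardinal, let θ ≤ λ be a regular cardinal such that I is θ-regular, and let f⃗ = ⟨f_ξ : ξ < λ⟩ be a <_I-increasing sequence of functions from A to the ordinals. If f⃗ satisfies (*)_θ, then f⃗ is not Bad_θ. -/
noncomputable section

namespace PCFPaper

open Set

variable (A : Set Ordinal.{0}) (I : Set (Set Ordinal.{0}))

-- helper lemmas for star_implies_not_bad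

lemma mk_eq_of_diff_subsingleton {s t : Set Ordinal.{0}} (hts : t ⊆ s)
    (h1 : (s \ t).Subsingleton) (hs : Cardinal.aleph0 ≤ Cardinal.mk s) :
    Cardinal.mk t = Cardinal.mk s := by
  have hd : Cardinal.mk (s \ t : Set Ordinal) ≤ 1 := h1.cardinalMk_le_one
  have heq : Cardinal.mk (s \ t : Set Ordinal) + Cardinal.mk t = Cardinal.mk s :=
    Cardinal.mk_diff_add_mk hts
  have hts' : Cardinal.mk t ≤ Cardinal.mk s := Cardinal.mk_le_mk_of_subset hts
  have ht : Cardinal.aleph0 ≤ Cardinal.mk t := by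
    by_contra hlt
    push_neg at hlt
    have h2 : Cardinal.mk s ≤ 1 + Cardinal.mk t := heq ▸ add_le_add_left hd _
    have h3 : Cardinal.mk s < Cardinal.aleph0 :=
      lt_of_le_of_lt h2 (Cardinal.add_lt_aleph0 Cardinal.one_lt_aleph0 hlt)
    exact absurd hs h3.not_ge
  have h4 : Cardinal.mk s ≤ Cardinal.mk t + 1 := by
    calc Cardinal.mk s = Cardinal.mk (s \ t : Set Ordinal) + Cardinal.mk t := heq.symm
    _ ≤ 1 + Cardinal.mk t := add_le_add_left hd _
    _ = Cardinal.mk t + 1 := add_comm _ _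
  rw [Cardinal.add_one_of_aleph0_le ht] at h4
  exact le_antisymm hts' h4

lemma not_mem_D_of_mem_I {I D : Set (Set Ordinal.{0})}
    (hDI : D ∩ I = ∅) {B : Set Ordinal.{0}} (hB : B ∈ I) : B ∉ D := by
  intro hBD
  exact (Set.eq_empty_iff_forall_notMem.mp hDI B) ⟨hBD, hB⟩

lemma compl_mem_D {A : Set Ordinal.{0}} {I D : Set (Set Ordinal.{0})}
    (hI : IsIdealOn A I) (hD : IsUltrafilterOn A D) (hDI : D ∩ I = ∅)
    {B : Set Ordinal.{0}} (hB : B ∈ I) : A \ B ∈ D := by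
  rcases hD.mem_or_compl_mem B (hI.subset_of_mem B hB) with h | h
  · exact absurd h (not_mem_D_of_mem_I hDI hB)
  · exact h

lemma ltI_mem_D {A : Set Ordinal.{0}} {I D : Set (Set Ordinal.{0})}
    (hI : IsIdealOn A I) (hD : IsUltrafilterOn A D) (hDI : D ∩ I = ∅)
    {u v : Ordinal.{0} → Ordinal.{0}} (h : ltI A I u v) :
    {a | a ∈ A ∧ u a < v a} ∈ D := by
  have hc : A \ {a | a ∈ A ∧ ¬ u a < v a} ∈ D := compl_mem_D hI hD hDI h
  have he : A \ {a | a ∈ A ∧ ¬ u a < v a} = {a | a ∈ A ∧ u a < v a} := by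
    ext a
    simp only [Set.mem_diff, Set.mem_setOf_eq]
    constructor
    · rintro ⟨haA, hn⟩
      refine ⟨haA, ?_⟩
      by_contra hnl
      exact hn ⟨haA, hnl⟩
    · rintro ⟨haA, hl⟩
      exact ⟨haA, fun hc => hc.2 hl⟩
  rwa [he] at hc

/-- a sequence satisfying `(*)_θ`, for `θ` with `I` `θ`-regular, is not `Bad_θ`. -/
theorem star_implies_not_bad (A : Set Ordinal.{0}) (I : Set (Set Ordinal.{0}))
    (hI : IsIdealOn A I) (hmin : (regI A I).ord < sInf A)
    (lam θ : Cardinal.{0}) (hlam : lam.IsRegular) (hθ : θ.IsRegular)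
    (hreglam : regI A I < lam) (hθlam : θ ≤ lam)
    (hθreg : ThetaRegular A I θ)
    (f : Ordinal.{0} → Ordinal.{0} → Ordinal.{0})
    (hf : IncreasingModI A I lam.ord f)
    (hstar : Star A I lam.ord θ f) :
    ¬ BadAt A I lam.ord f θ := by
  rintro ⟨S, D, hS, hD, hDI, hsand⟩
  -- basic facts
  have hθ0 : Cardinal.aleph0 ≤ θ := hθ.1
  have hregmem : regI A I ∈ {θ' : Cardinal.{0} | θ'.IsRegular ∧ ThetaRegular A I θ'} :=
    csInf_mem ⟨θ, hθ, hθreg⟩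
  have haleph_lam : Cardinal.aleph0 < lam := lt_of_le_of_lt hregmem.1.1 hreglam
  have hlamord : Order.IsSuccLimit lam.ord := Cardinal.isSuccLimit_ord hlam.1
  set μ := lam.ord with hμdef
  have hμpos : (0 : Ordinal) < μ := hlamord.bot_lt
  -- choose sandwich data
  choose hh hhS ηc hηc hlo hhi using hsand
  -- total versions
  set hfun : Ordinal.{0} → Ordinal.{0} → Ordinal.{0} :=
    fun ξ => if hξ : ξ < μ then hh ξ hξ else fun _ => 0 with hfundef
  set ηf : Ordinal.{0} → Ordinal.{0} := fun ξ => if hξ : ξ < μ then ηc ξ hξ else 0 with hηfdef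
  have hηflt : ∀ ξ, ηf ξ < μ := by
    intro ξ
    by_cases hξ : ξ < μ
    · simp only [hηfdef, dif_pos hξ]; exact hηc ξ hξ
    · simp only [hηfdef, dif_neg hξ]; exact hμpos
  have hfun_mem : ∀ ξ, ξ < μ → ∀ a ∈ A, hfun ξ a ∈ S a := by
    intro ξ hξ a ha
    simp only [hfundef, dif_pos hξ]
    exact hhS ξ hξ a ha
  have hfun_lo : ∀ ξ, ξ < μ → {a | a ∈ A ∧ f ξ a < hfun ξ a} ∈ D := by
    intro ξ hξ
    simp only [hfundef, dif_pos hξ]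
    exact hlo ξ hξ
  have hfun_hi : ∀ ξ, ξ < μ → {a | a ∈ A ∧ hfun ξ a < f (ηf ξ) a} ∈ D := by
    intro ξ hξ
    simp only [hfundef, hηfdef, dif_pos hξ]
    exact hhi ξ hξ
  -- the set of closure points of ηf below μ
  set X : Set Ordinal.{0} := {ξ | ξ < μ ∧ ∀ ρ < ξ, ηf ρ < ξ} with hXdef
  have hXsub : X ⊆ Set.Iio μ := fun ξ hξ => hξ.1
  have hXunbdd : ∀ α < μ, ∃ ξ ∈ X, α ≤ ξ := by
    intro α hα
    set F : Ordinal.{0} → Ordinal.{0} :=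
      fun β => max (β + 1) (Ordinal.bsup β (fun ρ _ => ηf ρ + 1)) with hFdef
    have hF : ∀ β < μ, F β < μ := by
      intro β hβ
      apply max_lt
      · rw [Ordinal.add_one_eq_succ]
        exact hlamord.succ_lt hβ
      · apply Ordinal.bsup_lt_ord
        · rw [hlam.cof_eq]
          exact Cardinal.lt_ord.mp hβ
        · intro ρ _
          rw [Ordinal.add_one_eq_succ]
          exact hlamord.succ_lt (hηflt ρ)
    set g : ℕ → Ordinal.{0} := fun n => Nat.rec (α + 1) (fun _ ih => F ih) n with hgdef
    have hg : ∀ n, g n < μ := by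
      intro n
      induction n with
      | zero =>
        show α + 1 < μ
        rw [Ordinal.add_one_eq_succ]
        exact hlamord.succ_lt hα
      | succ n ih => exact hF (g n) ih
    have hξμ : iSup g < μ := by
      apply Cardinal.iSup_lt_ord_of_isRegular hlam _ hg
      rw [Cardinal.mk_nat]
      exact haleph_lam
    refine ⟨iSup g, ⟨hξμ, ?_⟩, ?_⟩
    · intro ρ hρ
      obtain ⟨n, hn⟩ := Ordinal.lt_iSup_iff.mp hρ
      have h1 : ηf ρ + 1 ≤ Ordinal.bsup (g n) (fun ρ _ => ηf ρ + 1) := Ordinal.le_bsup _ ρ hn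
      have h2 : Ordinal.bsup (g n) (fun ρ _ => ηf ρ + 1) ≤ F (g n) := le_max_right _ _
      have h3 : F (g n) ≤ iSup g := Ordinal.le_iSup g (n + 1)
      have h4 : ηf ρ < ηf ρ + 1 := by
        rw [Ordinal.add_one_eq_succ]; exact Order.lt_succ _
      exact h4.trans_le (h1.trans (h2.trans h3))
    · have h5 : α < α + 1 := by rw [Ordinal.add_one_eq_succ]; exact Order.lt_succ _
      exact le_of_lt (h5.trans_le (Ordinal.le_iSup g 0))
  -- apply (*)_θ
  obtain ⟨X₀, hX₀X, hX₀mk, Z, hZI, hZinc⟩ := hstar X hXsub hXunbdd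
  have hX₀inf : Cardinal.aleph0 ≤ Cardinal.mk X₀ := by
    rw [hX₀mk]; exact Cardinal.aleph0_le_lift.mpr hθ0
  set X₁ : Set Ordinal.{0} := {ξ | ξ ∈ X₀ ∧ ∃ ζ ∈ X₀, ξ < ζ} with hX₁def
  have hX₁sub : X₁ ⊆ X₀ := fun ξ hξ => hξ.1
  have hdiffss : (X₀ \ X₁).Subsingleton := by
    intro x hx y hy
    by_contra hne
    rcases lt_or_gt_of_ne hne with h | h
    · exact hx.2 ⟨hx.1, y, hy.1, h⟩
    · exact hy.2 ⟨hy.1, x, hx.1, h⟩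
  have hX₁mk : Cardinal.mk X₁ = Cardinal.lift.{1} θ := by
    rw [← hX₀mk]
    exact mk_eq_of_diff_subsingleton hX₁sub hdiffss hX₀inf
  set nxt : Ordinal.{0} → Ordinal.{0} := fun ξ => sInf {ζ | ζ ∈ X₀ ∧ ξ < ζ} with hnxtdef
  have hnxt_mem : ∀ ξ ∈ X₁, nxt ξ ∈ X₀ ∧ ξ < nxt ξ := by
    intro ξ hξ
    have hne : {ζ | ζ ∈ X₀ ∧ ξ < ζ}.Nonempty := by
      obtain ⟨ζ, hζ, hlt⟩ := hξ.2
      exact ⟨ζ, hζ, hlt⟩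
    exact csInf_mem hne
  have hnxt_le : ∀ ξ, ∀ ζ ∈ X₀, ξ < ζ → nxt ξ ≤ ζ := fun ξ ζ hζ h => csInf_le' ⟨hζ, h⟩
  have hIiomk : Cardinal.mk (Set.Iio θ.ord) = Cardinal.lift.{1} θ := by
    rw [Ordinal.mk_Iio_ordinal, Cardinal.card_ord]
  obtain ⟨e⟩ : Nonempty (↥(Set.Iio θ.ord) ≃ ↥X₁) := Cardinal.eq.mp (by rw [hIiomk, hX₁mk])
  set Bset : Ordinal.{0} → Set Ordinal.{0} := fun ξ =>
    {a | a ∈ A ∧ f ξ a < hfun ξ a ∧ hfun ξ a < f (ηf ξ) a ∧ f (ηf ξ) a < f (nxt ξ) a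
      ∧ a ∉ Z ξ ∧ a ∉ Z (nxt ξ)} with hBdef
  have hX₀μ : ∀ ξ ∈ X₀, ξ < μ := fun ξ hξ => (hX₀X hξ).1
  have hBmemD : ∀ ξ ∈ X₁, Bset ξ ∈ D := by
    intro ξ hξ
    have hξ0 : ξ ∈ X₀ := hξ.1
    have hξμ : ξ < μ := hX₀μ ξ hξ0
    obtain ⟨hn0, hltn⟩ := hnxt_mem ξ hξ
    have hnμ : nxt ξ < μ := hX₀μ _ hn0
    have hηlt2 : ηf ξ < nxt ξ := (hX₀X hn0).2 ξ hltn
    have hD1 := hfun_lo ξ hξμ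
    have hD2 := hfun_hi ξ hξμ
    have hD3 : {a | a ∈ A ∧ f (ηf ξ) a < f (nxt ξ) a} ∈ D :=
      ltI_mem_D hI hD hDI (hf (ηf ξ) (hηflt ξ) (nxt ξ) hnμ hηlt2)
    have hD4 : A \ Z ξ ∈ D := compl_mem_D hI hD hDI (hZI ξ hξ0)
    have hD5 : A \ Z (nxt ξ) ∈ D := compl_mem_D hI hD hDI (hZI _ hn0)
    have hint : {a | a ∈ A ∧ f ξ a < hfun ξ a} ∩ ({a | a ∈ A ∧ hfun ξ a < f (ηf ξ) a} ∩
        ({a | a ∈ A ∧ f (ηf ξ) a < f (nxt ξ) a} ∩ ((A \ Z ξ) ∩ (A \ Z (nxt ξ))))) ∈ D :=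
      hD.inter_mem _ hD1 _ (hD.inter_mem _ hD2 _ (hD.inter_mem _ hD3 _ (hD.inter_mem _ hD4 _ hD5)))
    refine hD.superset_mem _ hint _ ?_ ?_
    · rintro a ⟨⟨haA, h1⟩, ⟨_, h2⟩, ⟨_, h3⟩, ⟨_, h4⟩, ⟨_, h5⟩⟩
      exact ⟨haA, h1, h2, h3, h4, h5⟩
    · intro a ha; exact ha.1
  set ξs : ∀ i : Ordinal.{0}, i < θ.ord → Ordinal.{0} :=
    fun i hi => ((e ⟨i, hi⟩ : ↥X₁) : Ordinal) with hξsdef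
  have hξsX₁ : ∀ i hi, ξs i hi ∈ X₁ := fun i hi => (e ⟨i, hi⟩).2
  set As : Ordinal.{0} → Set Ordinal.{0} :=
    fun i => if hi : i < θ.ord then Bset (ξs i hi) else A with hAsdef
  have hAspos : ∀ i < θ.ord, IsPositive A I (As i) := by
    intro i hi
    have hAe : As i = Bset (ξs i hi) := by simp only [hAsdef, dif_pos hi]
    rw [hAe]
    have hBD := hBmemD _ (hξsX₁ i hi)
    exact ⟨fun a ha => ha.1, fun hBI => not_mem_D_of_mem_I hDI hBI hBD⟩
  obtain ⟨H, hHsub, hHmk, a, haI⟩ := hθreg As hAspos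
  have haBset : ∀ i (hi : i ∈ H), a ∈ Bset (ξs i (hHsub hi)) := by
    intro i hi
    have h1 : a ∈ As i := Set.mem_iInter₂.mp haI i hi
    have hi' : i < θ.ord := hHsub hi
    have hAe : As i = Bset (ξs i hi') := by simp only [hAsdef, dif_pos hi']
    rwa [hAe] at h1
  have haA : a ∈ A := by
    have hne : H.Nonempty := by
      rw [← Set.nonempty_coe_sort, ← Cardinal.mk_ne_zero_iff, hHmk]
      simp only [ne_eq, Cardinal.lift_eq_zero]
      exact (Cardinal.aleph0_pos.trans_le hθ0).ne'
    obtain ⟨i, hi⟩ := hne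
    exact (haBset i hi).1
  have hmono : ∀ i (hi : i ∈ H), ∀ j (hj : j ∈ H),
      ξs i (hHsub hi) < ξs j (hHsub hj) →
      hfun (ξs i (hHsub hi)) a < hfun (ξs j (hHsub hj)) a := by
    intro i hi j hj hlt
    obtain ⟨_, h1, h2, h3, h4, h5⟩ := haBset i hi
    obtain ⟨_, g1, _, _, g4, _⟩ := haBset j hj
    have hξi1 : ξs i (hHsub hi) ∈ X₁ := hξsX₁ _ _
    have hξj1 : ξs j (hHsub hj) ∈ X₁ := hξsX₁ _ _
    have hnle : nxt (ξs i (hHsub hi)) ≤ ξs j (hHsub hj) := hnxt_le _ _ hξj1.1 hlt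
    have hstep : f (nxt (ξs i (hHsub hi))) a ≤ f (ξs j (hHsub hj)) a := by
      rcases eq_or_lt_of_le hnle with he | hlt2
      · rw [he]
      · exact le_of_lt (hZinc (nxt (ξs i (hHsub hi))) (hnxt_mem _ hξi1).1
          (ξs j (hHsub hj)) hξj1.1 hlt2 a ⟨haA, fun hmem => hmem.elim h5 g4⟩)
    calc hfun (ξs i (hHsub hi)) a < f (ηf (ξs i (hHsub hi))) a := h2
    _ < f (nxt (ξs i (hHsub hi))) a := h3
    _ ≤ f (ξs j (hHsub hj)) a := hstep
    _ < hfun (ξs j (hHsub hj)) a := g1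
  have hinj : Function.Injective (fun i : ↥H => (⟨hfun (ξs i.1 (hHsub i.2)) a,
      hfun_mem _ (hX₀μ _ (hX₁sub (hξsX₁ i.1 (hHsub i.2)))) a haA⟩ : ↥(S a))) := by
    intro i j hij
    have hval : hfun (ξs i.1 (hHsub i.2)) a = hfun (ξs j.1 (hHsub j.2)) a :=
      congrArg Subtype.val hij
    rcases lt_trichotomy (ξs i.1 (hHsub i.2)) (ξs j.1 (hHsub j.2)) with h | h | h
    · exact absurd hval (hmono i.1 i.2 j.1 j.2 h).ne
    · have he2 : (⟨i.1, hHsub i.2⟩ : ↥(Set.Iio θ.ord)) = ⟨j.1, hHsub j.2⟩ :=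
        e.injective (Subtype.ext h)
      exact Subtype.ext (congrArg (Subtype.val : ↥(Set.Iio θ.ord) → Ordinal.{0}) he2)
    · exact absurd hval.symm (hmono j.1 j.2 i.1 i.2 h).ne
  have hle : Cardinal.lift.{1} θ ≤ Cardinal.mk (S a) := by
    rw [← hHmk]
    exact Cardinal.mk_le_of_injective hinj
  exact absurd hle (hS a haA).not_ge



end PCFPaper
end
end

section
/- Let A be a collection of regular cardinals with no maximum element, and let I be an ideal on A with wsat(I) < min(A) (A is weakly progressive over I). Suppose λ ∈ pcf_I(A) has a universal cofinal sequence f⃗ = ⟨f_ξ : ξ < λ⟩ that has a J_{<λ}^I-exact upper bound f. Then the set B = {a ∈ A : f(a) = a} is a generator for J_{<λ⁺}^I[A], i.e. J_{<λ⁺}^I[A] is the ideal generated by J_{<λ}^I[A] ∪ {B}. -/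
noncomputable section

namespace PCFPaper

open Set

variable (A : Set Ordinal.{0}) (I : Set (Set Ordinal.{0}))

/-! ### Auxiliary lemmas -/

lemma isLimit_of_regSet {A : Set Ordinal.{0}} (hA : IsRegularCardSet A) :
    ∀ a ∈ A, Order.IsSuccLimit a := by
  intro a ha
  obtain ⟨c, hc, rfl⟩ := hA a ha
  exact Cardinal.isSuccLimit_ord hc.aleph0_le

lemma Jlt_mono (A : Set Ordinal.{0}) (I : Set (Set Ordinal.{0}))
    (hI : IsIdealOn A I) (lam : Cardinal.{0}) {X Y : Set Ordinal.{0}}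
    (hX : X ∈ Jlt A I lam) (hYX : Y ⊆ X) : Y ∈ Jlt A I lam := by
  refine ⟨hYX.trans hX.1, ?_⟩
  rcases hX.2 with hXI | h
  · exact Or.inl (hI.mem_of_subset X hXI Y hYX)
  · refine Or.inr fun D hD hDI hYD => h D hD hDI ?_
    exact hD.superset_mem Y hYD X hYX hX.1

lemma Jlt_union (A : Set Ordinal.{0}) (I : Set (Set Ordinal.{0}))
    (hI : IsIdealOn A I) (lam : Cardinal.{0}) {X Y : Set Ordinal.{0}}
    (hX : X ∈ Jlt A I lam) (hY : Y ∈ Jlt A I lam) : X ∪ Y ∈ Jlt A I lam := by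
  refine ⟨Set.union_subset hX.1 hY.1, Or.inr ?_⟩
  intro D hD hDI hUD
  have hnotI : ∀ Z ∈ D, Z ∉ I := by
    intro Z hZD hZI
    have : Z ∈ D ∩ I := ⟨hZD, hZI⟩
    rw [hDI] at this
    exact this
  rcases hD.mem_or_compl_mem X hX.1 with hXD | hXc
  · rcases hX.2 with hXI | h
    · exact absurd hXI (hnotI X hXD)
    · exact h D hD hDI hXD
  · have hYD : Y ∈ D := by
      refine hD.superset_mem _ (hD.inter_mem _ hUD _ hXc) Y ?_ hY.1
      rintro a ⟨hXY, -, hnX⟩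
      exact hXY.resolve_left hnX
    rcases hY.2 with hYI | h
    · exact absurd hYI (hnotI Y hYD)
    · exact h D hD hDI hYD

lemma memD_of_compl_Jlt {A : Set Ordinal.{0}} {I : Set (Set Ordinal.{0})}
    {lam : Cardinal.{0}} {D : Set (Set Ordinal.{0})}
    (hD : IsUltrafilterOn A D) (hdis : ∀ Z ∈ D, Z ∉ Jlt A I lam)
    (P : Ordinal.{0} → Prop) (hP : {a | a ∈ A ∧ ¬ P a} ∈ Jlt A I lam) :
    {a | a ∈ A ∧ P a} ∈ D := by
  have hTA : {a | a ∈ A ∧ P a} ⊆ A := fun a ha => ha.1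
  rcases hD.mem_or_compl_mem _ hTA with h | h
  · exact h
  · exfalso
    have heq : A \ {a | a ∈ A ∧ P a} = {a | a ∈ A ∧ ¬ P a} := by
      ext a
      simp only [Set.mem_diff, Set.mem_setOf_eq]
      tauto
    rw [heq] at h
    exact hdis _ h hP

lemma aleph0_le_of_universal {A : Set Ordinal.{0}} {I : Set (Set Ordinal.{0})}
    (hA : IsRegularCardSet A) {lam : Cardinal.{0}} (hlam : lam ∈ pcf A I)
    {f : Ordinal.{0} → Ordinal.{0} → Ordinal.{0}}
    (hf : IsUniversalSequence A I lam f) : Cardinal.aleph0 ≤ lam := by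
  classical
  obtain ⟨D, hD, hDI, hcf⟩ := hlam
  have hlim : ∀ a ∈ A, Order.IsSuccLimit a := isLimit_of_regSet hA
  have h0 : (fun _ => (0 : Ordinal.{0})) ∈ prodSet A := fun a ha => (hlim a ha).pos
  by_contra hlt
  push_neg at hlt
  rcases eq_or_ne lam 0 with h0' | hne
  · obtain ⟨ξ, hξ, -⟩ := hf.2.2 D hD hDI hcf _ h0
    rw [h0', Cardinal.ord_zero] at hξ
    exact (zero_le (a := ξ)).not_gt hξ
  · have hSne : {c : Cardinal.{0} | ∃ F : Ordinal.{0} → Ordinal.{0} → Ordinal.{0},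
        (∀ i < c.ord, F i ∈ prodSet A) ∧
        ∀ g ∈ prodSet A, ∃ i < c.ord, leD A D g (F i)}.Nonempty := by
      by_contra hS
      rw [Set.not_nonempty_iff_eq_empty] at hS
      apply hne
      rw [← hcf]
      show sInf _ = 0
      rw [hS]
      exact Cardinal.sInf_empty
    have hmem : lam ∈ {c : Cardinal.{0} | ∃ F : Ordinal.{0} → Ordinal.{0} → Ordinal.{0},
        (∀ i < c.ord, F i ∈ prodSet A) ∧
        ∀ g ∈ prodSet A, ∃ i < c.ord, leD A D g (F i)} := by
      rw [← hcf]
      exact csInf_mem hSne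
    obtain ⟨F, hF1, hF2⟩ := hmem
    obtain ⟨n, hn⟩ := Cardinal.lt_aleph0.mp hlt
    have hfin : (Set.Iio lam.ord).Finite := by
      have heq : Set.Iio lam.ord = (fun m : ℕ => (m : Ordinal.{0})) '' Set.Iio n := by
        ext x
        constructor
        · intro hx
          rw [Set.mem_Iio, hn, Cardinal.ord_nat] at hx
          obtain ⟨m, rfl⟩ := Ordinal.lt_omega0.mp (hx.trans (Ordinal.nat_lt_omega0 n))
          refine ⟨m, ?_, rfl⟩
          rw [Set.mem_Iio]
          exact_mod_cast hx
        · rintro ⟨m, hm, rfl⟩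
          rw [Set.mem_Iio, hn, Cardinal.ord_nat]
          show (m : Ordinal.{0}) < (n : Ordinal.{0})
          exact_mod_cast hm
      rw [heq]
      exact (Set.finite_Iio n).image _
    have hne0 : (Set.Iio lam.ord).Nonempty := by
      refine ⟨0, ?_⟩
      rw [Set.mem_Iio, pos_iff_ne_zero]
      intro h
      exact hne (Cardinal.ord_eq_zero.mp h)
    set g' : Ordinal.{0} → Ordinal.{0} :=
      fun a => sSup ((fun i => F i a + 1) '' Set.Iio lam.ord) with hg'
    have himg : ∀ a, ((fun i => F i a + 1) '' Set.Iio lam.ord).Finite :=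
      fun a => hfin.image _
    have himgne : ∀ a, ((fun i => F i a + 1) '' Set.Iio lam.ord).Nonempty :=
      fun a => hne0.image _
    have hgp : g' ∈ prodSet A := by
      intro a ha
      obtain ⟨i, hi, heq⟩ := (himgne a).csSup_mem (himg a)
      show g' a < a
      rw [hg']
      simp only
      rw [← heq]
      have h1 : F i a < a := hF1 i hi a ha
      show F i a + 1 < a
      rw [Ordinal.add_one_eq_succ]
      exact (hlim a ha).succ_lt h1
    have hdom : ∀ i < lam.ord, ∀ a ∈ A, F i a < g' a := by
      intro i hi a ha
      have h1 : F i a + 1 ≤ g' a :=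
        le_csSup (himg a).bddAbove ⟨i, hi, rfl⟩
      have h2 : F i a < F i a + 1 := by
        rw [Ordinal.add_one_eq_succ]
        exact Order.lt_succ _
      exact h2.trans_le h1
    obtain ⟨i, hi, hleD⟩ := hF2 g' hgp
    have hempty : {a | a ∈ A ∧ g' a ≤ F i a} = (∅ : Set Ordinal.{0}) := by
      ext a
      simp only [Set.mem_setOf_eq, Set.mem_empty_iff_false, iff_false, not_and]
      intro ha hle
      exact (hdom i hi a ha).not_ge hle
    have : {a | a ∈ A ∧ g' a ≤ F i a} ∈ D := hleD
    rw [hempty] at this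
    exact hD.empty_not_mem this

/-- an exact upper bound of a universal cofinal sequence yields a
generator `B = {a ∈ A : g a = a}` for `J_{<λ⁺}^I [A]`. -/
theorem generator_of_eub (A : Set Ordinal.{0}) (I : Set (Set Ordinal.{0}))
    (hI : IsIdealOn A I) (hA : IsRegularCardSet A)
    (hnomax : ∀ a ∈ A, ∃ b ∈ A, a < b)
    (hmin : (wsat A I).ord < sInf A)
    (lam : Cardinal.{0}) (hlam : lam ∈ pcf A I)
    (f : Ordinal.{0} → Ordinal.{0} → Ordinal.{0})
    (hf : IsUniversalSequence A I lam f)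
    (g : Ordinal.{0} → Ordinal.{0})
    (hg : IsEUBseq A (Jlt A I lam) lam.ord f g) :
    Jlt A I (Order.succ lam) =
      generatedBy A (Jlt A I lam) {a | a ∈ A ∧ g a = a} := by
  classical
  have hlim : ∀ a ∈ A, Order.IsSuccLimit a := isLimit_of_regSet hA
  have hinf : Cardinal.aleph0 ≤ lam := aleph0_le_of_universal hA hlam hf
  have hordlim : Order.IsSuccLimit lam.ord := Cardinal.isSuccLimit_ord hinf
  have hnotI : ∀ D : Set (Set Ordinal.{0}), D ∩ I = ∅ → ∀ Z ∈ D, Z ∉ I := by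
    intro D hDI Z hZD hZI
    have : Z ∈ D ∩ I := ⟨hZD, hZI⟩
    rw [hDI] at this
    exact this
  have hUB : ∀ ξ < lam.ord, leI A (Jlt A I lam) (f ξ) g := hg.1.1
  have hempJ : (∅ : Set Ordinal.{0}) ∈ Jlt A I lam :=
    ⟨Set.empty_subset _, Or.inl hI.empty_mem⟩
  have hgle : {a | a ∈ A ∧ ¬ g a ≤ a} ∈ Jlt A I lam := by
    have hid : IsUBseq A (Jlt A I lam) lam.ord f (fun a => a) := by
      intro ξ hξ
      show {a | a ∈ A ∧ ¬ f ξ a ≤ a} ∈ Jlt A I lam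
      have heq : {a | a ∈ A ∧ ¬ f ξ a ≤ a} = (∅ : Set Ordinal.{0}) := by
        ext a
        simp only [Set.mem_setOf_eq, Set.mem_empty_iff_false, iff_false, not_and, not_not]
        intro ha
        exact (hf.1 ξ hξ a ha).le
      rw [heq]
      exact hempJ
    exact hg.1.2 _ hid
  ext X
  constructor
  · rintro ⟨hXA, hX2⟩
    refine ⟨hXA, X \ {a | a ∈ A ∧ g a = a}, ⟨fun a ha => hXA ha.1, ?_⟩, ?_⟩
    · rcases hX2 with hXI | hXall
      · exact Or.inl (hI.mem_of_subset X hXI _ Set.diff_subset)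
      · refine Or.inr ?_
        intro D hD hDI hYD
        by_contra hge
        push_neg at hge
        have hXD : X ∈ D := hD.superset_mem _ hYD X Set.diff_subset hXA
        have hcf : cfProd A D = lam :=
          le_antisymm (Order.lt_succ_iff.mp (hXall D hD hDI hXD)) hge
        have hdis : ∀ Z ∈ D, Z ∉ Jlt A I lam := by
          intro Z hZD hZJ
          rcases hZJ.2 with hZI | hZ
          · exact hnotI D hDI Z hZD hZI
          · have := hZ D hD hDI hZD
            rw [hcf] at this
            exact lt_irrefl lam this
        have hY0 : {a | a ∈ A ∧ g a ≤ a} ∈ D :=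
          memD_of_compl_Jlt hD hdis (fun a => g a ≤ a) hgle
        set h : Ordinal.{0} → Ordinal.{0} := fun a => if g a < a then g a else 0 with hh
        have hhp : h ∈ prodSet A := by
          intro a ha
          show (if g a < a then g a else 0) < a
          by_cases hc : g a < a
          · rwa [if_pos hc]
          · rw [if_neg hc]
            exact (hlim a ha).pos
        obtain ⟨ξ, hξ, hle⟩ := hf.2.2 D hD hDI hcf h hhp
        have hη : Order.succ ξ < lam.ord := hordlim.succ_lt hξ
        have hS1 : {a | a ∈ A ∧ f ξ a < f (Order.succ ξ) a} ∈ D :=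
          memD_of_compl_Jlt hD hdis (fun a => f ξ a < f (Order.succ ξ) a)
            (hf.2.1 ξ hξ _ hη (Order.lt_succ ξ))
        have hS2 : {a | a ∈ A ∧ f (Order.succ ξ) a ≤ g a} ∈ D :=
          memD_of_compl_Jlt hD hdis (fun a => f (Order.succ ξ) a ≤ g a) (hUB _ hη)
        have hleD : {a | a ∈ A ∧ h a ≤ f ξ a} ∈ D := hle
        have hZD : (X \ {a | a ∈ A ∧ g a = a}) ∩ ({a | a ∈ A ∧ g a ≤ a} ∩
            ({a | a ∈ A ∧ f ξ a < f (Order.succ ξ) a} ∩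
              ({a | a ∈ A ∧ f (Order.succ ξ) a ≤ g a} ∩
                {a | a ∈ A ∧ h a ≤ f ξ a}))) ∈ D :=
          hD.inter_mem _ hYD _ (hD.inter_mem _ hY0 _
            (hD.inter_mem _ hS1 _ (hD.inter_mem _ hS2 _ hleD)))
        have hZne : ((X \ {a | a ∈ A ∧ g a = a}) ∩ ({a | a ∈ A ∧ g a ≤ a} ∩
            ({a | a ∈ A ∧ f ξ a < f (Order.succ ξ) a} ∩
              ({a | a ∈ A ∧ f (Order.succ ξ) a ≤ g a} ∩
                {a | a ∈ A ∧ h a ≤ f ξ a})))).Nonempty := by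
          rw [Set.nonempty_iff_ne_empty]
          intro hemp
          rw [hemp] at hZD
          exact hD.empty_not_mem hZD
        obtain ⟨a, ⟨haX, haB⟩, ⟨-, hgla⟩, ⟨-, h1⟩, ⟨-, h2⟩, -, h3⟩ := hZne
        have haA : a ∈ A := hXA haX
        have hglt : g a < a := by
          rcases lt_or_eq_of_le hgla with hlt' | heq'
          · exact hlt'
          · exact absurd ⟨haA, heq'⟩ haB
        have hha : h a = g a := if_pos hglt
        have : f ξ a < f ξ a :=
          lt_of_lt_of_le (lt_of_lt_of_le h1 h2) (hha ▸ h3)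
        exact lt_irrefl _ this
    · intro a ha
      by_cases hb : a ∈ {a | a ∈ A ∧ g a = a}
      · exact Or.inr hb
      · exact Or.inl ⟨ha, hb⟩
  · rintro ⟨hXA, Y, hY, hXYB⟩
    refine ⟨hXA, Or.inr ?_⟩
    intro D hD hDI hXD
    have hBA : {a | a ∈ A ∧ g a = a} ⊆ A := fun a ha => ha.1
    have hYBD : Y ∪ {a | a ∈ A ∧ g a = a} ∈ D :=
      hD.superset_mem X hXD _ hXYB (Set.union_subset hY.1 hBA)
    rcases hD.mem_or_compl_mem Y hY.1 with hYD | hYc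
    · rcases hY.2 with hYI | hcase
      · exact absurd hYI (hnotI D hDI Y hYD)
      · exact (hcase D hD hDI hYD).trans (Order.lt_succ lam)
    · have hBD : {a | a ∈ A ∧ g a = a} ∈ D := by
        refine hD.superset_mem _ (hD.inter_mem _ hYBD _ hYc) _ ?_ hBA
        rintro a ⟨hu, -, hnY⟩
        exact hu.resolve_left hnY
      by_cases hdisj : ∀ Z ∈ D, Z ∉ Jlt A I lam
      · have h1lt : (1 : Ordinal.{0}) < lam.ord := by
          have := hordlim.succ_lt hordlim.pos
          simpa using this
        have hcov : ∀ h ∈ prodSet A, ∃ ξ < lam.ord, leD A D h (f ξ) := by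
          intro h hhp
          set h' : Ordinal.{0} → Ordinal.{0} :=
            fun a => if a ∈ {a | a ∈ A ∧ g a = a} then h a else 0 with hh'
          have W1 : {a | a ∈ A ∧ ¬ f 0 a < f 1 a} ∈ Jlt A I lam :=
            hf.2.1 0 hordlim.pos 1 h1lt zero_lt_one
          have W2 : {a | a ∈ A ∧ ¬ f 1 a ≤ g a} ∈ Jlt A I lam := hUB 1 h1lt
          have hbad : ltI A (Jlt A I lam) h' g := by
            show {a | a ∈ A ∧ ¬ h' a < g a} ∈ Jlt A I lam
            refine Jlt_mono A I hI lam (Jlt_union A I hI lam W1 W2) ?_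
            rintro a ⟨haA, hna⟩
            by_cases hb : a ∈ {a | a ∈ A ∧ g a = a}
            · exfalso
              apply hna
              have : h' a = h a := if_pos hb
              rw [this, hb.2]
              exact hhp a haA
            · have h0' : h' a = 0 := if_neg hb
              by_cases hw : f 0 a < f 1 a
              · by_cases hw2 : f 1 a ≤ g a
                · exfalso
                  apply hna
                  rw [h0']
                  exact lt_of_le_of_lt zero_le (lt_of_lt_of_le hw hw2)
                · exact Or.inr ⟨haA, hw2⟩
              · exact Or.inl ⟨haA, hw⟩
          obtain ⟨ξ, hξ, hexact⟩ := hg.2 h' hbad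
          refine ⟨ξ, hξ, ?_⟩
          have hT : {a | a ∈ A ∧ h' a ≤ f ξ a} ∈ D :=
            memD_of_compl_Jlt hD hdisj (fun a => h' a ≤ f ξ a) hexact
          have hsub : {a | a ∈ A ∧ g a = a} ∩ {a | a ∈ A ∧ h' a ≤ f ξ a} ⊆
              {a | a ∈ A ∧ h a ≤ f ξ a} := by
            rintro a ⟨hb, haA, hle⟩
            refine ⟨haA, ?_⟩
            simp only [hh'] at hle
            rwa [if_pos hb] at hle
          exact hD.superset_mem _ (hD.inter_mem _ hBD _ hT) _ hsub fun a ha => ha.1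
        have hle : cfProd A D ≤ lam := csInf_le' ⟨f, hf.1, hcov⟩
        exact Order.lt_succ_iff.mpr hle
      · push_neg at hdisj
        obtain ⟨Z, hZD, hZJ⟩ := hdisj
        rcases hZJ.2 with hZI | hZ
        · exact absurd hZI (hnotI D hDI Z hZD)
        · exact (hZ D hD hDI hZD).trans (Order.lt_succ lam)

end PCFPaper
end
end
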